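/- If M is a compact positively invariant and locally accessible set for a control-affine system, then M contains at least one and at most finitely many invariant control sets; each is compact, has nonempty interior, and for every x ∈ M there is an invariant control set C with int C ∩ O⁺_pc(x) ≠ ∅, where O⁺_pc(x) is the set of points reachable from x by piecewise constant controls. -/

import Mathlib

open MeasureTheory Set Topology

/-- A control-affine system `ẋ = f₀(x) + ∑ vᵢ(t) fᵢ(x)` on `ℝ^d` with Lipschitz
continuous vector fields and compact control range `V ⊆ ℝ^m`.  The (unique, global)
solutions are bundled as the data `φ` together with their defining properties. -/
structure CAS (d m : ℕ) where
  /-- the drift vector field -/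
  f0 : (Fin d → ℝ) → (Fin d → ℝ)
  /-- the control vector fields -/
  f : Fin m → (Fin d → ℝ) → (Fin d → ℝ)
  /-- the control range -/
  V : Set (Fin m → ℝ)
  lip0 : ∃ K, LipschitzWith K f0
  lip : ∀ i, ∃ K, LipschitzWith K (f i)
  V_compact : IsCompact V
  /-- the solution map: `φ x v t` is the solution at time `t` starting at `x` with control `v` -/
  φ : (Fin d → ℝ) → (ℝ → (Fin m → ℝ)) → ℝ → (Fin d → ℝ)
  φ_init : ∀ x v, φ x v 0 = x
  φ_cont : ∀ x v, Continuous (φ x v)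
  /-- solutions are (Carathéodory) solutions of the ODE -/
  φ_sol : ∀ (x : Fin d → ℝ) (v : ℝ → (Fin m → ℝ)), Measurable v → (∀ t, v t ∈ V) →
    ∀ t, 0 ≤ t →
      φ x v t = x + ∫ s in (0:ℝ)..t, (f0 (φ x v s) + ∑ i, v s i • f (i) (φ x v s))

namespace CAS

variable {d m : ℕ}

/-- the set of admissible controls -/
def ctrl (S : CAS d m) : Set (ℝ → (Fin m → ℝ)) :=
  {v | Measurable v ∧ ∀ t, v t ∈ S.V}

/-- a control is piecewise constant if it has only finitely many discontinuities on
every bounded interval, i.e. it is constant between the members of a sequence of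
switching times tending to infinity -/
def PiecewiseConst (v : ℝ → (Fin m → ℝ)) : Prop :=
  ∃ τ : ℕ → ℝ, τ 0 = 0 ∧ StrictMono τ ∧ Filter.Tendsto τ Filter.atTop Filter.atTop ∧
    ∀ n, ∀ t ∈ Ico (τ n) (τ (n + 1)), v t = v (τ n)

/-- the reachable set from `x` -/
def reach (S : CAS d m) (x : Fin d → ℝ) : Set (Fin d → ℝ) :=
  {y | ∃ v ∈ S.ctrl, ∃ t ≥ (0:ℝ), S.φ x v t = y}

/-- the set reachable from `x` with piecewise constant controls -/
def reachPC (S : CAS d m) (x : Fin d → ℝ) : Set (Fin d → ℝ) :=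
  {y | ∃ v ∈ S.ctrl, PiecewiseConst v ∧ ∃ t ≥ (0:ℝ), S.φ x v t = y}

/-- the reachable set from `x` up to time `T` -/
def reachLe (S : CAS d m) (T : ℝ) (x : Fin d → ℝ) : Set (Fin d → ℝ) :=
  {y | ∃ v ∈ S.ctrl, ∃ t ∈ Icc (0:ℝ) T, S.φ x v t = y}

/-- the controllable set to `x` up to time `T` -/
def contrLe (S : CAS d m) (T : ℝ) (x : Fin d → ℝ) : Set (Fin d → ℝ) :=
  {y | ∃ v ∈ S.ctrl, ∃ t ∈ Icc (0:ℝ) T, S.φ y v t = x}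

/-- positive invariance of a set -/
def posInv (S : CAS d m) (M : Set (Fin d → ℝ)) : Prop :=
  ∀ x ∈ M, ∀ v ∈ S.ctrl, ∀ t ≥ (0:ℝ), S.φ x v t ∈ M

/-- invariance of a set -/
def inv (S : CAS d m) (M : Set (Fin d → ℝ)) : Prop :=
  ∀ t ≥ (0:ℝ), {y | ∃ x ∈ M, ∃ v ∈ S.ctrl, S.φ x v t = y} = M

/-- the two defining properties (i) controlled invariance and (ii) approximate
reachability of a control set -/
def controlSetProps (S : CAS d m) (D : Set (Fin d → ℝ)) : Prop :=
  (∀ x ∈ D, ∃ v ∈ S.ctrl, ∀ t ≥ (0:ℝ), S.φ x v t ∈ D) ∧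
  (∀ x ∈ D, D ⊆ closure (S.reach x))

/-- a control set: a maximal nonempty set with the properties `controlSetProps` -/
def isControlSet (S : CAS d m) (D : Set (Fin d → ℝ)) : Prop :=
  D.Nonempty ∧ S.controlSetProps D ∧
  ∀ D', D ⊆ D' → S.controlSetProps D' → D' = D

/-- an invariant control set -/
def isInvControlSet (S : CAS d m) (C : Set (Fin d → ℝ)) : Prop :=
  S.isControlSet C ∧ ∀ x ∈ C, closure C = closure (S.reach x)

/-- local accessibility at a point -/
def locAccAt (S : CAS d m) (x : Fin d → ℝ) : Prop :=
  ∀ T > (0:ℝ), ∀ N ∈ 𝓝 x,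
    (interior (S.reachLe T x) ∩ N).Nonempty ∧ (interior (S.contrLe T x) ∩ N).Nonempty

/-- local accessibility on a set -/
def locAccOn (S : CAS d m) (M : Set (Fin d → ℝ)) : Prop :=
  ∀ x ∈ M, S.locAccAt x

/-- the domain of attraction of a set -/
def domAttr (S : CAS d m) (C : Set (Fin d → ℝ)) : Set (Fin d → ℝ) :=
  {x | (closure (S.reach x) ∩ C).Nonempty}

/-- the strict domain of attraction of an invariant control set -/
def domAttrStrict (S : CAS d m) (C : Set (Fin d → ℝ)) : Set (Fin d → ℝ) :=
  {x | (closure (S.reach x) ∩ C).Nonempty ∧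
    ∀ C', S.isInvControlSet C' → (closure (S.reach x) ∩ C').Nonempty → C' = C}

end CAS

namespace CAS

variable {d m : ℕ}



/-- the right-hand side of the ODE along a curve `ψ` with control `u` -/
def rhs (S : CAS d m) (u : ℝ → (Fin m → ℝ)) (ψ : ℝ → (Fin d → ℝ)) : ℝ → (Fin d → ℝ) :=
  fun s => S.f0 (ψ s) + ∑ i, u s i • S.f i (ψ s)

lemma f0_continuous (S : CAS d m) : Continuous S.f0 :=
  S.lip0.choose_spec.continuous

lemma f_continuous (S : CAS d m) (i : Fin m) : Continuous (S.f i) :=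
  (S.lip i).choose_spec.continuous

lemma mem_ctrl_const (S : CAS d m) {c : Fin m → ℝ} (hc : c ∈ S.V) :
    (fun _ : ℝ => c) ∈ S.ctrl :=
  ⟨measurable_const, fun _ => hc⟩

lemma piecewiseConst_const (c : Fin m → ℝ) : PiecewiseConst (fun _ : ℝ => c) := by
  refine ⟨fun n => n, by norm_num, ?_, ?_, fun n t _ => rfl⟩
  · exact fun a b h => Nat.cast_lt.2 h
  · exact tendsto_natCast_atTop_atTop

lemma exists_Vbound (S : CAS d m) : ∃ B : ℝ, 0 ≤ B ∧ ∀ c ∈ S.V, ‖c‖ ≤ B := by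
  obtain ⟨r, hr⟩ := S.V_compact.isBounded.subset_closedBall 0
  exact ⟨max r 0, le_max_right _ _, fun c hc =>
    le_trans (by simpa [Metric.mem_closedBall, dist_zero_right] using hr hc) (le_max_left _ _)⟩

lemma exists_goodL (S : CAS d m) :
    ∃ L : ℝ, 1 ≤ L ∧ ∀ (a b : Fin d → ℝ), ∀ c ∈ S.V,
      ‖(S.f0 a + ∑ i, c i • S.f i a) - (S.f0 b + ∑ i, c i • S.f i b)‖ ≤ L * ‖a - b‖ := by
  obtain ⟨K0, hK0⟩ := S.lip0
  choose K hK using S.lip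
  obtain ⟨B, hB0, hB⟩ := S.exists_Vbound
  have hBK : (0:ℝ) ≤ B * ∑ i, (K i : ℝ) :=
    mul_nonneg hB0 (Finset.sum_nonneg fun i _ => (K i).coe_nonneg)
  refine ⟨1 + (K0 : ℝ) + B * ∑ i, (K i : ℝ), by nlinarith [K0.coe_nonneg], fun a b c hc => ?_⟩
  have key : (S.f0 a + ∑ i, c i • S.f i a) - (S.f0 b + ∑ i, c i • S.f i b)
      = (S.f0 a - S.f0 b) + ∑ i, c i • (S.f i a - S.f i b) := by
    simp only [smul_sub, Finset.sum_sub_distrib]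
    abel
  rw [key]
  have h0 : ‖S.f0 a - S.f0 b‖ ≤ (K0 : ℝ) * ‖a - b‖ := by
    simpa [dist_eq_norm] using hK0.dist_le_mul a b
  have hsum : ‖∑ i, c i • (S.f i a - S.f i b)‖ ≤ B * (∑ i, (K i : ℝ)) * ‖a - b‖ := by
    calc ‖∑ i, c i • (S.f i a - S.f i b)‖ ≤ ∑ i, ‖c i • (S.f i a - S.f i b)‖ :=
          norm_sum_le _ _
      _ ≤ ∑ i, B * ((K i : ℝ) * ‖a - b‖) := by
          refine Finset.sum_le_sum fun i _ => ?_
          rw [norm_smul]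
          have h1 : ‖c i‖ ≤ B := le_trans (norm_le_pi_norm c i) (hB c hc)
          have h2 : ‖S.f i a - S.f i b‖ ≤ (K i : ℝ) * ‖a - b‖ := by
            simpa [dist_eq_norm] using (hK i).dist_le_mul a b
          exact mul_le_mul h1 h2 (norm_nonneg _) hB0
      _ = B * (∑ i, (K i : ℝ)) * ‖a - b‖ := by
          rw [← Finset.mul_sum, ← Finset.sum_mul, mul_assoc]
  calc ‖(S.f0 a - S.f0 b) + ∑ i, c i • (S.f i a - S.f i b)‖
      ≤ ‖S.f0 a - S.f0 b‖ + ‖∑ i, c i • (S.f i a - S.f i b)‖ := norm_add_le _ _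
    _ ≤ (K0 : ℝ) * ‖a - b‖ + B * (∑ i, (K i : ℝ)) * ‖a - b‖ := add_le_add h0 hsum
    _ ≤ (1 + (K0 : ℝ) + B * ∑ i, (K i : ℝ)) * ‖a - b‖ := by nlinarith [norm_nonneg (a - b)]

/-- a measurable function bounded by an interval-integrable function is interval-integrable -/
lemma intervalIntegrable_of_le {X : Type*} [NormedAddCommGroup X] [MeasurableSpace X] [BorelSpace X] [SecondCountableTopology X] {g : ℝ → X} {G : ℝ → ℝ}
    (hm : Measurable g) (hG : Continuous G) (hle : ∀ s, ‖g s‖ ≤ G s) (a b : ℝ) :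
    IntervalIntegrable g MeasureTheory.volume a b := by
  refine IntervalIntegrable.mono_fun (hG.intervalIntegrable a b)
    hm.aestronglyMeasurable ?_
  exact Filter.Eventually.of_forall fun s => by
    simpa [Real.norm_eq_abs, abs_of_nonneg (le_trans (norm_nonneg _) (hle s))] using hle s

lemma rhs_measurable (S : CAS d m) {u : ℝ → (Fin m → ℝ)} {ψ : ℝ → (Fin d → ℝ)}
    (hu : Measurable u) (hψ : Continuous ψ) : Measurable (S.rhs u ψ) := by
  refine Measurable.add ((S.f0_continuous.comp hψ).measurable) ?_
  refine Finset.measurable_sum _ fun i _ => Measurable.smul (f := fun s => u s i) (g := fun s => S.f i (ψ s)) ?_ ?_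
  · exact (measurable_pi_apply i).comp hu
  · exact ((S.f_continuous i).comp hψ).measurable

lemma rhs_norm_le (S : CAS d m) {u : ℝ → (Fin m → ℝ)} {B : ℝ}
    (hB : ∀ t, ‖u t‖ ≤ B) (ψ : ℝ → (Fin d → ℝ)) (s : ℝ) :
    ‖S.rhs u ψ s‖ ≤ ‖S.f0 (ψ s)‖ + ∑ i, B * ‖S.f i (ψ s)‖ := by
  refine le_trans (norm_add_le _ _) (add_le_add le_rfl ?_)
  refine le_trans (norm_sum_le _ _) (Finset.sum_le_sum fun i _ => ?_)
  rw [norm_smul]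
  exact mul_le_mul (le_trans (norm_le_pi_norm (u s) i) (hB s)) le_rfl (norm_nonneg _)
    (le_trans (norm_nonneg _) (le_trans (norm_le_pi_norm (u s) i) (hB s)))

lemma rhs_intervalIntegrable (S : CAS d m) {u : ℝ → (Fin m → ℝ)} {ψ : ℝ → (Fin d → ℝ)}
    (hu : u ∈ S.ctrl) (hψ : Continuous ψ) (a b : ℝ) :
    IntervalIntegrable (S.rhs u ψ) MeasureTheory.volume a b := by
  obtain ⟨B, hB0, hB⟩ := S.exists_Vbound
  refine intervalIntegrable_of_le (S.rhs_measurable hu.1 hψ)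
    (Continuous.add (S.f0_continuous.comp hψ).norm ?_)
    (fun s => S.rhs_norm_le (fun t => hB _ (hu.2 t)) ψ s) a b
  exact continuous_finset_sum _ fun i _ =>
    continuous_const.mul ((S.f_continuous i).comp hψ).norm


end CAS

/-- An integral form of Grönwall's inequality. -/
lemma gronwall_aux {g : ℝ → ℝ} {A L T : ℝ} (hA : 0 ≤ A) (hL : 0 < L)
    (hg : Continuous g) (hg0 : ∀ t, 0 ≤ g t)
    (h : ∀ t ∈ Icc (0:ℝ) T, g t ≤ A + L * ∫ s in (0:ℝ)..t, g s) :
    ∀ t ∈ Icc (0:ℝ) T, g t ≤ A * Real.exp (L * t) := by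
  set G : ℝ → ℝ := fun t => ∫ s in (0:ℝ)..t, g s with hGdef
  have hGd : ∀ t : ℝ, HasDerivAt G (g t) t := fun t =>
    (hg.integral_hasStrictDerivAt 0 t).hasDerivAt
  have hGnn : ∀ t ∈ Icc (0:ℝ) T, 0 ≤ G t := fun t ht =>
    intervalIntegral.integral_nonneg ht.1 fun u _ => hg0 u
  have hGb : ∀ t ∈ Icc (0:ℝ) T, ‖G t‖ ≤ gronwallBound 0 L A (t - 0) := by
    refine norm_le_gronwallBound_of_norm_deriv_right_le
      (Continuous.continuousOn ?_) (fun t _ => (hGd t).hasDerivWithinAt) (by simp [hGdef])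
      (fun t ht => ?_)
    · exact continuous_iff_continuousAt.2 fun t => (hGd t).continuousAt
    · have ht' : t ∈ Icc (0:ℝ) T := ⟨ht.1, le_of_lt ht.2⟩
      rw [Real.norm_eq_abs, abs_of_nonneg (hg0 t), Real.norm_eq_abs,
        abs_of_nonneg (hGnn t ht')]
      have := h t ht'
      linarith
  intro t ht
  have hb := hGb t ht
  rw [Real.norm_eq_abs, abs_of_nonneg (hGnn t ht), sub_zero,
    gronwallBound_of_K_ne_0 (ne_of_gt hL)] at hb
  have := h t ht
  have hexp : (1:ℝ) ≤ Real.exp (L * t) := by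
    rw [← Real.exp_zero]
    exact Real.exp_le_exp.2 (mul_nonneg (le_of_lt hL) ht.1)
  have hLA : L * G t ≤ A * (Real.exp (L * t) - 1) := by
    have := mul_le_mul_of_nonneg_left hb (le_of_lt hL)
    calc L * G t ≤ L * (0 * Real.exp (L * t) + A / L * (Real.exp (L * t) - 1)) := this
      _ = A * (Real.exp (L * t) - 1) := by field_simp; ring
  linarith

namespace CAS

/-- The master estimate comparing two solutions with possibly different controls. -/
lemma master (S : CAS d m) {L Cf T : ℝ} (hL1 : 1 ≤ L)
    (hL : ∀ (a b : Fin d → ℝ), ∀ c ∈ S.V,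
      ‖(S.f0 a + ∑ i, c i • S.f i a) - (S.f0 b + ∑ i, c i • S.f i b)‖ ≤ L * ‖a - b‖)
    (hT : 0 ≤ T) {ψ₁ ψ₂ : ℝ → Fin d → ℝ} {v w : ℝ → Fin m → ℝ}
    (hv : v ∈ S.ctrl) (hw : w ∈ S.ctrl) (hc1 : Continuous ψ₁) (hc2 : Continuous ψ₂)
    (he1 : ∀ t ∈ Icc (0:ℝ) T, ψ₁ t = ψ₁ 0 + ∫ s in (0:ℝ)..t, S.rhs v ψ₁ s)
    (he2 : ∀ t ∈ Icc (0:ℝ) T, ψ₂ t = ψ₂ 0 + ∫ s in (0:ℝ)..t, S.rhs w ψ₂ s)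
    (hCf0 : 0 ≤ Cf) (hCf : ∀ s ∈ Icc (0:ℝ) T, ∀ i, ‖S.f i (ψ₂ s)‖ ≤ Cf) :
    ∀ t ∈ Icc (0:ℝ) T,
      ‖ψ₁ t - ψ₂ t‖ ≤
        (‖ψ₁ 0 - ψ₂ 0‖ + ∫ s in (0:ℝ)..T, (∑ i, |v s i - w s i|) * Cf) *
          Real.exp (L * T) := by
  obtain ⟨B, hB0, hB⟩ := S.exists_Vbound
  set R : ℝ → ℝ := fun s => (∑ i, |v s i - w s i|) * Cf with hRdef
  have hRnn : ∀ s, 0 ≤ R s := fun s =>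
    mul_nonneg (Finset.sum_nonneg fun i _ => abs_nonneg _) hCf0
  have hRmeas : Measurable R := by
    refine Measurable.mul ?_ measurable_const
    exact Finset.measurable_sum _ fun i _ =>
      (((measurable_pi_apply i).comp hv.1).sub ((measurable_pi_apply i).comp hw.1)).abs
  have hRbd : ∀ s, ‖R s‖ ≤ (∑ _i : Fin m, 2 * B) * Cf := by
    intro s
    rw [Real.norm_eq_abs, abs_of_nonneg (hRnn s)]
    refine mul_le_mul_of_nonneg_right (Finset.sum_le_sum fun i _ => ?_) hCf0
    have h1 : |v s i| ≤ B := le_trans (norm_le_pi_norm (v s) i) (hB _ (hv.2 s))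
    have h2 : |w s i| ≤ B := le_trans (norm_le_pi_norm (w s) i) (hB _ (hw.2 s))
    calc |v s i - w s i| ≤ |v s i| + |w s i| := abs_sub _ _
      _ ≤ 2 * B := by linarith
  have hRint : ∀ a b : ℝ, IntervalIntegrable R MeasureTheory.volume a b := fun a b =>
    intervalIntegrable_of_le hRmeas continuous_const hRbd a b
  set g : ℝ → ℝ := fun t => ‖ψ₁ t - ψ₂ t‖ with hgdef
  have hgc : Continuous g := (hc1.sub hc2).norm
  have hg0 : ∀ t, 0 ≤ g t := fun t => norm_nonneg _
  set A : ℝ := ‖ψ₁ 0 - ψ₂ 0‖ + ∫ s in (0:ℝ)..T, R s with hAdef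
  have hA : 0 ≤ A := add_nonneg (norm_nonneg _)
    (intervalIntegral.integral_nonneg hT fun u _ => hRnn u)
  have key : ∀ t ∈ Icc (0:ℝ) T, g t ≤ A + L * ∫ s in (0:ℝ)..t, g s := by
    intro t ht
    have hint1 := S.rhs_intervalIntegrable hv hc1 0 t
    have hint2 := S.rhs_intervalIntegrable hw hc2 0 t
    have hsub : ψ₁ t - ψ₂ t =
        (ψ₁ 0 - ψ₂ 0) + ∫ s in (0:ℝ)..t, (S.rhs v ψ₁ s - S.rhs w ψ₂ s) := by
      rw [intervalIntegral.integral_sub hint1 hint2, he1 t ht, he2 t ht]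
      abel
    have hpw : ∀ s ∈ Icc (0:ℝ) t, ‖S.rhs v ψ₁ s - S.rhs w ψ₂ s‖ ≤ L * g s + R s := by
      intro s hs
      have hsT : s ∈ Icc (0:ℝ) T := ⟨hs.1, le_trans hs.2 ht.2⟩
      have hdecomp : S.rhs v ψ₁ s - S.rhs w ψ₂ s =
          ((S.f0 (ψ₁ s) + ∑ i, v s i • S.f i (ψ₁ s)) -
            (S.f0 (ψ₂ s) + ∑ i, v s i • S.f i (ψ₂ s))) +
          ∑ i, (v s i - w s i) • S.f i (ψ₂ s) := by
        simp only [rhs, sub_smul, Finset.sum_sub_distrib]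
        abel
      rw [hdecomp]
      refine le_trans (norm_add_le _ _) (add_le_add (hL _ _ (v s) (hv.2 s)) ?_)
      calc ‖∑ i, (v s i - w s i) • S.f i (ψ₂ s)‖
          ≤ ∑ i, ‖(v s i - w s i) • S.f i (ψ₂ s)‖ := norm_sum_le _ _
        _ ≤ ∑ i, |v s i - w s i| * Cf := by
            refine Finset.sum_le_sum fun i _ => ?_
            rw [norm_smul, Real.norm_eq_abs]
            exact mul_le_mul_of_nonneg_left (hCf s hsT i) (abs_nonneg _)
        _ = R s := (Finset.sum_mul _ _ _).symm
    have hnormint : ‖∫ s in (0:ℝ)..t, (S.rhs v ψ₁ s - S.rhs w ψ₂ s)‖ ≤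
        ∫ s in (0:ℝ)..t, (L * g s + R s) := by
      refine le_trans (intervalIntegral.norm_integral_le_integral_norm ht.1) ?_
      refine intervalIntegral.integral_mono_on ht.1 (hint1.sub hint2).norm
        (((continuous_const.mul hgc).intervalIntegrable 0 t).add (hRint 0 t)) hpw
    have hsplit : (∫ s in (0:ℝ)..t, (L * g s + R s)) =
        L * (∫ s in (0:ℝ)..t, g s) + ∫ s in (0:ℝ)..t, R s := by
      rw [intervalIntegral.integral_add (f := fun s => L * g s) ((continuous_const.mul hgc).intervalIntegrable 0 t) (hRint 0 t),
        intervalIntegral.integral_const_mul]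
    have hRmono : (∫ s in (0:ℝ)..t, R s) ≤ ∫ s in (0:ℝ)..T, R s :=
      intervalIntegral.integral_mono_interval le_rfl ht.1 ht.2
        (Filter.Eventually.of_forall hRnn) (hRint 0 T)
    calc g t = ‖(ψ₁ 0 - ψ₂ 0) + ∫ s in (0:ℝ)..t, (S.rhs v ψ₁ s - S.rhs w ψ₂ s)‖ := by
          show ‖ψ₁ t - ψ₂ t‖ = _
          rw [hsub]
      _ ≤ ‖ψ₁ 0 - ψ₂ 0‖ + ‖∫ s in (0:ℝ)..t, (S.rhs v ψ₁ s - S.rhs w ψ₂ s)‖ := norm_add_le _ _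
      _ ≤ ‖ψ₁ 0 - ψ₂ 0‖ + (L * (∫ s in (0:ℝ)..t, g s) + ∫ s in (0:ℝ)..t, R s) := by
          rw [← hsplit]; exact add_le_add le_rfl hnormint
      _ ≤ A + L * ∫ s in (0:ℝ)..t, g s := by
          rw [hAdef]; linarith
  intro t ht
  have hL0 : (0:ℝ) < L := lt_of_lt_of_le one_pos hL1
  have := gronwall_aux hA hL0 hgc hg0 key t ht
  refine le_trans this (mul_le_mul_of_nonneg_left ?_ hA)
  exact Real.exp_le_exp.2 (mul_le_mul_of_nonneg_left ht.2 (le_of_lt hL0))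

end CAS
namespace CAS

lemma phi_sol' (S : CAS d m) {v : ℝ → Fin m → ℝ} (hv : v ∈ S.ctrl) (x : Fin d → ℝ)
    {T : ℝ} (hT : 0 ≤ T) :
    ∀ t ∈ Icc (0:ℝ) T, S.φ x v t = S.φ x v 0 + ∫ s in (0:ℝ)..t, S.rhs v (S.φ x v) s := by
  intro t ht
  rw [S.φ_init]
  exact S.φ_sol x v hv.1 hv.2 t ht.1

lemma exists_Cf (S : CAS d m) {ψ : ℝ → Fin d → ℝ} (hψ : Continuous ψ) (T : ℝ) :
    ∃ Cf : ℝ, 0 ≤ Cf ∧ ∀ s ∈ Icc (0:ℝ) T, ∀ i, ‖S.f i (ψ s)‖ ≤ Cf := by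
  have hF : Continuous (fun s => (fun i => S.f i (ψ s) : Fin m → Fin d → ℝ)) :=
    continuous_pi fun i => (S.f_continuous i).comp hψ
  obtain ⟨C, hC⟩ := isCompact_Icc.exists_bound_of_continuousOn hF.continuousOn
  refine ⟨max C 0, le_max_right _ _, fun s hs i => ?_⟩
  have h1 : ‖S.f i (ψ s)‖ ≤ ‖(fun j => S.f j (ψ s) : Fin m → Fin d → ℝ)‖ :=
    norm_le_pi_norm (fun j => S.f j (ψ s) : Fin m → Fin d → ℝ) i
  exact le_trans (le_trans h1 (hC s hs)) (le_max_left _ _)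

/-- Lipschitz dependence of solutions on the initial state, on compact time intervals. -/
lemma phi_init_lipschitz (S : CAS d m) {v : ℝ → Fin m → ℝ} (hv : v ∈ S.ctrl)
    (x : Fin d → ℝ) {T : ℝ} (hT : 0 ≤ T) :
    ∃ Cb : ℝ, 0 < Cb ∧ ∀ y, ∀ t ∈ Icc (0:ℝ) T,
      ‖S.φ y v t - S.φ x v t‖ ≤ Cb * ‖y - x‖ := by
  obtain ⟨L, hL1, hL⟩ := S.exists_goodL
  obtain ⟨Cf, hCf0, hCf⟩ := S.exists_Cf (S.φ_cont x v) T
  refine ⟨Real.exp (L * T), Real.exp_pos _, fun y t ht => ?_⟩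
  have h := S.master hL1 hL hT hv hv (S.φ_cont y v) (S.φ_cont x v)
    (S.phi_sol' hv y hT) (S.phi_sol' hv x hT) hCf0 hCf t ht
  simp only [sub_self, abs_zero, Finset.sum_const, smul_zero, Finset.sum_const_zero,
    zero_mul, intervalIntegral.integral_zero, add_zero, S.φ_init] at h
  linarith [h, mul_comm (Real.exp (L * T)) ‖y - x‖]

/-- Two controls that agree on `(0, T)` produce the same trajectory on `[0, T]`. -/
lemma phi_congr_ctrl (S : CAS d m) {v w : ℝ → Fin m → ℝ} (hv : v ∈ S.ctrl)
    (hw : w ∈ S.ctrl) (x : Fin d → ℝ) {T : ℝ} (hT : 0 ≤ T)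
    (hvw : ∀ s ∈ Ioo (0:ℝ) T, v s = w s) :
    ∀ t ∈ Icc (0:ℝ) T, S.φ x v t = S.φ x w t := by
  obtain ⟨L, hL1, hL⟩ := S.exists_goodL
  obtain ⟨Cf, hCf0, hCf⟩ := S.exists_Cf (S.φ_cont x w) T
  intro t ht
  have h := S.master hL1 hL hT hv hw (S.φ_cont x v) (S.φ_cont x w)
    (S.phi_sol' hv x hT) (S.phi_sol' hw x hT) hCf0 hCf t ht
  have hE : (∫ s in (0:ℝ)..T, (∑ i, |v s i - w s i|) * Cf) = 0 := by
    rw [intervalIntegral.integral_of_le hT, MeasureTheory.integral_Ioc_eq_integral_Ioo]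
    rw [MeasureTheory.setIntegral_congr_fun measurableSet_Ioo
      (g := fun _ => (0:ℝ)) (fun s hs => by rw [hvw s hs]; simp)]
    simp
  rw [hE, S.φ_init, S.φ_init, sub_self, norm_zero, zero_add, zero_mul] at h
  have h0 : ‖S.φ x v t - S.φ x w t‖ = 0 := le_antisymm h (norm_nonneg _)
  exact sub_eq_zero.1 (norm_eq_zero.1 h0)

/-- The cocycle (semigroup) property of the solution map. -/
lemma phi_cocycle (S : CAS d m) {v : ℝ → Fin m → ℝ} (hv : v ∈ S.ctrl) (x : Fin d → ℝ)
    {s t : ℝ} (hs : 0 ≤ s) (ht : 0 ≤ t) :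
    S.φ x v (s + t) = S.φ (S.φ x v s) (fun r => v (s + r)) t := by
  obtain ⟨L, hL1, hL⟩ := S.exists_goodL
  set v' : ℝ → Fin m → ℝ := fun r => v (s + r) with hv'def
  have hv' : v' ∈ S.ctrl := ⟨hv.1.comp (measurable_const_add s), fun r => hv.2 _⟩
  set y := S.φ x v s with hydef
  set ψ₁ : ℝ → Fin d → ℝ := fun r => S.φ x v (s + r) with hψ₁def
  have hc1 : Continuous ψ₁ := (S.φ_cont x v).comp (continuous_const.add continuous_id)
  have he1 : ∀ t' ∈ Icc (0:ℝ) t, ψ₁ t' = ψ₁ 0 + ∫ r in (0:ℝ)..t', S.rhs v' ψ₁ r := by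
    intro t' ht'
    have h1 : S.φ x v (s + t') = x + ∫ u in (0:ℝ)..(s + t'), S.rhs v (S.φ x v) u :=
      S.φ_sol x v hv.1 hv.2 _ (by linarith [ht'.1])
    have h2 : S.φ x v (s + 0) = x + ∫ u in (0:ℝ)..(s + 0), S.rhs v (S.φ x v) u :=
      S.φ_sol x v hv.1 hv.2 _ (by linarith)
    have hadd : (∫ u in (0:ℝ)..s + 0, S.rhs v (S.φ x v) u) +
        (∫ u in (s + 0)..(s + t'), S.rhs v (S.φ x v) u) =
        ∫ u in (0:ℝ)..(s + t'), S.rhs v (S.φ x v) u :=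
      intervalIntegral.integral_add_adjacent_intervals
        (S.rhs_intervalIntegrable hv (S.φ_cont x v) _ _)
        (S.rhs_intervalIntegrable hv (S.φ_cont x v) _ _)
    have hcomp : (∫ r in (0:ℝ)..t', S.rhs v (S.φ x v) (s + r)) =
        ∫ u in (s + 0)..(s + t'), S.rhs v (S.φ x v) u :=
      intervalIntegral.integral_comp_add_left (fun u => S.rhs v (S.φ x v) u) s
    have hrhs : ∀ r, S.rhs v (S.φ x v) (s + r) = S.rhs v' ψ₁ r := fun r => rfl
    simp only [hψ₁def]
    rw [h1, h2, ← hadd]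
    simp only [← hcomp]
    rw [show (∫ r in (0:ℝ)..t', S.rhs v (S.φ x v) (s + r)) =
        ∫ r in (0:ℝ)..t', S.rhs v' ψ₁ r from by simp only [hrhs]]
    abel
  obtain ⟨Cf, hCf0, hCf⟩ := S.exists_Cf (S.φ_cont y v') t
  have h := S.master hL1 hL ht hv' hv' hc1 (S.φ_cont y v') he1
    (S.phi_sol' hv' y ht) hCf0 hCf t ⟨ht, le_rfl⟩
  simp only [sub_self, abs_zero, Finset.sum_const, smul_zero, Finset.sum_const_zero,
    zero_mul, intervalIntegral.integral_zero, add_zero] at h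
  have h0 : ψ₁ 0 = S.φ y v' 0 := by
    rw [S.φ_init, hψ₁def, hydef]
    simp
  rw [h0, sub_self, norm_zero, zero_mul] at h
  have : ‖ψ₁ t - S.φ y v' t‖ = 0 := le_antisymm h (norm_nonneg _)
  have := sub_eq_zero.1 (norm_eq_zero.1 this)
  simpa [hψ₁def] using this

end CAS
namespace CAS

lemma reach_self (S : CAS d m) (x : Fin d → ℝ) (h : S.ctrl.Nonempty) : x ∈ S.reach x := by
  obtain ⟨v, hv⟩ := h
  exact ⟨v, hv, 0, le_rfl, S.φ_init x v⟩

lemma mem_reach_phi (S : CAS d m) {v} (hv : v ∈ S.ctrl) (x : Fin d → ℝ) {t : ℝ}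
    (ht : 0 ≤ t) : S.φ x v t ∈ S.reach x :=
  ⟨v, hv, t, ht, rfl⟩

lemma reach_trans (S : CAS d m) {x y : Fin d → ℝ} (hy : y ∈ S.reach x) :
    S.reach y ⊆ S.reach x := by
  obtain ⟨v, hv, s, hs, rfl⟩ := hy
  rintro u ⟨w, hw, t, ht, rfl⟩
  set vt : ℝ → Fin m → ℝ := fun r => if r < s then v r else w (r - s) with hvtdef
  have hvt : vt ∈ S.ctrl := by
    constructor
    · exact Measurable.ite (measurableSet_lt measurable_id measurable_const) hv.1
        (hw.1.comp (measurable_id.sub measurable_const))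
    · intro r
      by_cases h : r < s <;> simp [hvtdef, h, hv.2, hw.2]
  have h1 : S.φ x vt s = S.φ x v s := by
    refine S.phi_congr_ctrl hvt hv x hs (fun r hr => ?_) s ⟨hs, le_rfl⟩
    simp [hvtdef, hr.2]
  have h2 : S.φ (S.φ x v s) (fun r => vt (s + r)) t = S.φ (S.φ x v s) w t := by
    refine S.phi_congr_ctrl ⟨hvt.1.comp (measurable_const_add s), fun r => hvt.2 _⟩ hw _ ht
      (fun r hr => ?_) t ⟨ht, le_rfl⟩
    have : ¬ (s + r < s) := by linarith [hr.1]
    simp [hvtdef, this]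
  have h3 : S.φ x vt (s + t) = S.φ (S.φ x vt s) (fun r => vt (s + r)) t :=
    S.phi_cocycle hvt x hs ht
  refine ⟨vt, hvt, s + t, by linarith, ?_⟩
  rw [h3, h1, h2]

lemma reach_mono_closure (S : CAS d m) {x y : Fin d → ℝ} (hy : y ∈ closure (S.reach x)) :
    S.reach y ⊆ closure (S.reach x) := by
  rintro u ⟨w, hw, t, ht, rfl⟩
  rw [Metric.mem_closure_iff]
  intro ε hε
  obtain ⟨Cb, hCb, hlip⟩ := S.phi_init_lipschitz hw y ht
  obtain ⟨y', hy', hdy⟩ := Metric.mem_closure_iff.1 hy (ε / Cb) (div_pos hε hCb)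
  refine ⟨S.φ y' w t, S.reach_trans hy' (S.mem_reach_phi hw y' ht), ?_⟩
  have := hlip y' t ⟨ht, le_rfl⟩
  rw [dist_eq_norm] at hdy ⊢
  rw [norm_sub_rev]
  calc ‖S.φ y' w t - S.φ y w t‖ ≤ Cb * ‖y' - y‖ := this
    _ < Cb * (ε / Cb) := by
        refine mul_lt_mul_of_pos_left ?_ hCb
        rw [norm_sub_rev]
        exact hdy
    _ = ε := by field_simp

lemma closure_reach_mono (S : CAS d m) {x y : Fin d → ℝ} (hy : y ∈ closure (S.reach x)) :
    closure (S.reach y) ⊆ closure (S.reach x) :=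
  closure_minimal (S.reach_mono_closure hy) isClosed_closure

end CAS
namespace CAS

lemma exists_pc_approx (S : CAS d m) {v : ℝ → Fin m → ℝ} (hv : v ∈ S.ctrl)
    {T δ : ℝ} (hT : 0 < T) (hδ : 0 < δ) :
    ∃ u, u ∈ S.ctrl ∧ PiecewiseConst u ∧ (∫ s in (0:ℝ)..T, ‖v s - u s‖) ≤ δ := by
  classical
  obtain ⟨B, hB0, hB⟩ := S.exists_Vbound
  have hVne : S.V.Nonempty := ⟨v 0, hv.2 0⟩
  have hproj : ∀ y : Fin m → ℝ, ∃ p, p ∈ S.V ∧ ∀ c ∈ S.V, dist y p ≤ dist y c := by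
    intro y
    obtain ⟨p, hp, hpd⟩ := S.V_compact.exists_infDist_eq_dist hVne y
    exact ⟨p, hp, fun c hc => by rw [← hpd]; exact Metric.infDist_le_dist_of_mem hc⟩
  choose pv hpvV hpvd using hproj
  set ε₁ : ℝ := δ / 4 with hε₁def
  have hε₁ : 0 < ε₁ := by positivity
  set ε₂ : ℝ := δ / (4 * (T + 1)) with hε₂def
  have hε₂ : 0 < ε₂ := by positivity
  set fv : ℝ → Fin m → ℝ := (Ioc (0:ℝ) T).indicator v with hfdef
  have hvInt : MeasureTheory.IntegrableOn v (Ioc (0:ℝ) T) := by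
    refine MeasureTheory.Measure.integrableOn_of_bounded (M := B) measure_Ioc_lt_top.ne
      hv.1.aestronglyMeasurable ?_
    exact Filter.Eventually.of_forall fun s => hB _ (hv.2 s)
  have hfInt : MeasureTheory.Integrable fv := hvInt.integrable_indicator measurableSet_Ioc
  obtain ⟨g, hgsupp, hgL1, hgcont, hgint⟩ :=
    hfInt.exists_hasCompactSupport_integral_sub_le hε₁
  obtain ⟨η, hη, hgη⟩ := Metric.uniformContinuousOn_iff.1
    (isCompact_Icc.uniformContinuousOn_of_continuous (s := Icc (0:ℝ) T)
      hgcont.continuousOn) ε₂ hε₂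
  obtain ⟨n, hn⟩ := exists_nat_gt (T / η)
  set N : ℕ := n + 1 with hNdef
  have hN0 : (0:ℝ) < N := by positivity
  set h : ℝ := T / N with hhdef
  have hh : 0 < h := div_pos hT hN0
  have hhη : h < η := by
    rw [hhdef, div_lt_iff₀ hN0]
    have h1 : T / η < N := lt_of_lt_of_le hn (by exact_mod_cast Nat.le_succ n)
    calc T = (T / η) * η := by field_simp
      _ < N * η := by exact mul_lt_mul_of_pos_right h1 hη
      _ = η * N := mul_comm _ _
  set u : ℝ → Fin m → ℝ := fun t => pv (g (h * (⌊t / h⌋ : ℤ))) with hudef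
  have humem : u ∈ S.ctrl := by
    constructor
    · have h1 : Measurable fun t : ℝ => (⌊t / h⌋ : ℤ) :=
        Int.measurable_floor.comp (measurable_id.div_const h)
      exact (measurable_from_top (f := fun k : ℤ => pv (g (h * k)))).comp h1
    · intro t; exact hpvV _
  have hupc : PiecewiseConst u := by
    refine ⟨fun k => k * h, by simp, ?_, ?_, ?_⟩
    · intro a b hab
      exact mul_lt_mul_of_pos_right (by exact_mod_cast hab) hh
    · exact tendsto_natCast_atTop_atTop.atTop_mul_const hh
    · intro k t htm
      have hfl : ⌊t / h⌋ = (k : ℤ) := by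
        rw [Int.floor_eq_iff]
        constructor
        · rw [le_div_iff₀ hh]
          exact_mod_cast htm.1
        · rw [div_lt_iff₀ hh]
          push_cast
          exact_mod_cast htm.2
      have hfl2 : ⌊((k:ℝ) * h) / h⌋ = (k : ℤ) := by
        rw [mul_div_cancel_right₀ _ (ne_of_gt hh)]
        exact_mod_cast Int.floor_natCast k
      simp only [hudef, hfl, hfl2]
  have hpoint : ∀ s ∈ Ioc (0:ℝ) T, ‖v s - u s‖ ≤ 2 * ‖fv s - g s‖ + 2 * ε₂ := by
    intro s hs
    set p : ℝ := h * (⌊s / h⌋ : ℤ) with hpdef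
    have hfl0 : (0:ℤ) ≤ ⌊s / h⌋ := Int.floor_nonneg.2 (div_nonneg hs.1.le hh.le)
    have hp0 : 0 ≤ p := mul_nonneg hh.le (by exact_mod_cast hfl0)
    have hps : p ≤ s := by
      calc p = h * (⌊s / h⌋ : ℤ) := rfl
        _ ≤ h * (s / h) := mul_le_mul_of_nonneg_left (Int.floor_le _) hh.le
        _ = s := by field_simp
    have hpT : p ≤ T := le_trans hps hs.2
    have hsp : s - p < h := by
      have h1 : s / h < (⌊s / h⌋ : ℤ) + 1 := Int.lt_floor_add_one _
      have h2 : s < ((⌊s / h⌋ : ℤ) + 1) * h := by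
        rw [← div_lt_iff₀ hh]
        exact h1
      have : s < p + h := by rw [hpdef]; nlinarith
      linarith
    have hdist : dist (g s) (g p) < ε₂ := by
      refine hgη s ⟨hs.1.le, hs.2⟩ p ⟨hp0, hpT⟩ ?_
      rw [Real.dist_eq, abs_of_nonneg (by linarith)]
      linarith
    have hproj_le : dist (g p) (pv (g p)) ≤ dist (g p) (v s) := hpvd _ _ (hv.2 s)
    have hfv : fv s = v s := indicator_of_mem hs _
    have husp : u s = pv (g p) := rfl
    calc ‖v s - u s‖ = dist (v s) (pv (g p)) := by rw [husp, dist_eq_norm]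
      _ ≤ dist (v s) (g s) + dist (g s) (g p) + dist (g p) (pv (g p)) :=
          dist_triangle4 _ _ _ _
      _ ≤ dist (v s) (g s) + ε₂ + (dist (g p) (g s) + dist (g s) (v s)) :=
          add_le_add (add_le_add le_rfl hdist.le) (hproj_le.trans (dist_triangle _ _ _))
      _ ≤ 2 * ‖fv s - g s‖ + 2 * ε₂ := by
          rw [hfv]
          have e1 : dist (v s) (g s) = ‖v s - g s‖ := dist_eq_norm _ _
          have e2 : dist (g s) (v s) = ‖v s - g s‖ := by rw [dist_comm]; exact e1
          have e3 : dist (g p) (g s) < ε₂ := by rw [dist_comm]; exact hdist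
          rw [e1, e2]
          linarith
  have huvInt : MeasureTheory.IntegrableOn (fun s => ‖v s - u s‖) (Ioc (0:ℝ) T) := by
    refine MeasureTheory.Measure.integrableOn_of_bounded (M := B + B) measure_Ioc_lt_top.ne
      (hv.1.sub humem.1).norm.aestronglyMeasurable ?_
    refine Filter.Eventually.of_forall fun s => ?_
    rw [Real.norm_eq_abs, abs_of_nonneg (norm_nonneg _)]
    calc ‖v s - u s‖ ≤ ‖v s‖ + ‖u s‖ := norm_sub_le _ _
      _ ≤ B + B := add_le_add (hB _ (hv.2 s)) (hB _ (humem.2 s))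
  have hGInt : MeasureTheory.Integrable (fun s => ‖fv s - g s‖) := (hfInt.sub hgint).norm
  have hRHSInt : MeasureTheory.IntegrableOn
      (fun s => 2 * ‖fv s - g s‖ + 2 * ε₂) (Ioc (0:ℝ) T) := by
    refine MeasureTheory.Integrable.add ?_ ?_
    · exact (hGInt.const_mul 2).integrableOn
    · exact MeasureTheory.integrableOn_const measure_Ioc_lt_top.ne
  have hvol : (MeasureTheory.volume (Ioc (0:ℝ) T)).toReal = T := by
    rw [Real.volume_Ioc, sub_zero, ENNReal.toReal_ofReal hT.le]
  refine ⟨u, humem, hupc, ?_⟩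
  calc (∫ s in (0:ℝ)..T, ‖v s - u s‖)
      = ∫ s in Ioc (0:ℝ) T, ‖v s - u s‖ := intervalIntegral.integral_of_le hT.le
    _ ≤ ∫ s in Ioc (0:ℝ) T, (2 * ‖fv s - g s‖ + 2 * ε₂) :=
        MeasureTheory.setIntegral_mono_on huvInt hRHSInt measurableSet_Ioc hpoint
    _ = (∫ s in Ioc (0:ℝ) T, 2 * ‖fv s - g s‖) + (∫ _s in Ioc (0:ℝ) T, 2 * ε₂) :=
        MeasureTheory.integral_add (hGInt.const_mul 2).integrableOn
          (MeasureTheory.integrableOn_const measure_Ioc_lt_top.ne)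
    _ = 2 * (∫ s in Ioc (0:ℝ) T, ‖fv s - g s‖) + 2 * ε₂ * T := by
        rw [MeasureTheory.integral_const_mul, MeasureTheory.setIntegral_const, MeasureTheory.measureReal_def, hvol,
          smul_eq_mul]
        ring
    _ ≤ 2 * ε₁ + 2 * ε₂ * T := by
        have hmono : (∫ s in Ioc (0:ℝ) T, ‖fv s - g s‖) ≤ ∫ s, ‖fv s - g s‖ :=
          MeasureTheory.setIntegral_le_integral hGInt
            (Filter.Eventually.of_forall fun s => norm_nonneg _)
        have := le_trans hmono hgL1
        linarith
    _ ≤ δ := by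
        rw [hε₁def, hε₂def]
        have h1 : 2 * (δ / 4) = δ / 2 := by ring
        have h2 : 2 * (δ / (4 * (T + 1))) * T ≤ δ / 2 := by
          have e : 2 * (δ / (4 * (T + 1))) * T = (δ * T) / (2 * (T + 1)) := by
            field_simp
            ring
          rw [e, div_le_div_iff₀ (by positivity) (by norm_num : (0:ℝ) < 2)]
          nlinarith
        linarith

end CAS
namespace CAS

lemma reach_subset_closure_reachPC (S : CAS d m) (x : Fin d → ℝ) :
    S.reach x ⊆ closure (S.reachPC x) := by
  rintro z ⟨v, hv, T, hT, rfl⟩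
  rcases eq_or_lt_of_le hT with h0 | hTpos
  · rw [← h0, S.φ_init]
    exact subset_closure ⟨fun _ => v 0, S.mem_ctrl_const (hv.2 0),
      piecewiseConst_const _, 0, le_rfl, S.φ_init _ _⟩
  · rw [Metric.mem_closure_iff]
    intro ε hε
    obtain ⟨L, hL1, hL⟩ := S.exists_goodL
    obtain ⟨Cf, hCf0, hCf⟩ := S.exists_Cf (S.φ_cont x v) T
    obtain ⟨B, hB0, hB⟩ := S.exists_Vbound
    set CE : ℝ := Real.exp (L * T) with hCEdef
    have hCE : 0 < CE := Real.exp_pos _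
    set δ : ℝ := ε / (2 * CE * (Cf + 1) * (m + 1)) with hδdef
    have hδ : 0 < δ := by positivity
    obtain ⟨u, hu, hupc, happrox⟩ := S.exists_pc_approx hv hTpos hδ
    refine ⟨S.φ x u T, ⟨u, hu, hupc, T, hT, rfl⟩, ?_⟩
    have h := S.master hL1 hL hT hu hv (S.φ_cont x u) (S.φ_cont x v)
      (S.phi_sol' hu x hT) (S.phi_sol' hv x hT) hCf0 hCf T ⟨hT, le_rfl⟩
    rw [S.φ_init, S.φ_init, sub_self, norm_zero, zero_add] at h
    -- bound the control-difference integral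
    have hminteg : ∀ a b : ℝ, IntervalIntegrable
        (fun s => (∑ i, |u s i - v s i|) * Cf) MeasureTheory.volume a b := by
      intro a b
      refine intervalIntegrable_of_le (G := fun _ => (∑ _i : Fin m, (B + B)) * Cf) ?_
        continuous_const (fun s => ?_) a b
      · refine Measurable.mul ?_ measurable_const
        exact Finset.measurable_sum _ fun i _ =>
          (((measurable_pi_apply i).comp hu.1).sub ((measurable_pi_apply i).comp hv.1)).abs
      · rw [Real.norm_eq_abs, abs_of_nonneg
          (mul_nonneg (Finset.sum_nonneg fun i _ => abs_nonneg _) hCf0)]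
        refine mul_le_mul_of_nonneg_right (Finset.sum_le_sum fun i _ => ?_) hCf0
        have h1 : |u s i| ≤ B := le_trans (norm_le_pi_norm (u s) i) (hB _ (hu.2 s))
        have h2 : |v s i| ≤ B := le_trans (norm_le_pi_norm (v s) i) (hB _ (hv.2 s))
        calc |u s i - v s i| ≤ |u s i| + |v s i| := abs_sub _ _
          _ ≤ B + B := add_le_add h1 h2
    have hnorminteg : IntervalIntegrable
        (fun s => ((m : ℝ) * (Cf + 1)) * ‖v s - u s‖) MeasureTheory.volume 0 T := by
      refine intervalIntegrable_of_le (G := fun _ => ((m : ℝ) * (Cf + 1)) * (B + B)) ?_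
        continuous_const (fun s => ?_) 0 T
      · exact ((hv.1.sub hu.1).norm).const_mul _
      · rw [Real.norm_eq_abs, abs_of_nonneg (by positivity)]
        refine mul_le_mul_of_nonneg_left ?_ (by positivity)
        calc ‖v s - u s‖ ≤ ‖v s‖ + ‖u s‖ := norm_sub_le _ _
          _ ≤ B + B := add_le_add (hB _ (hv.2 s)) (hB _ (hu.2 s))
    have hEbound : (∫ s in (0:ℝ)..T, (∑ i, |u s i - v s i|) * Cf)
        ≤ (m : ℝ) * (Cf + 1) * δ := by
      calc (∫ s in (0:ℝ)..T, (∑ i, |u s i - v s i|) * Cf)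
          ≤ ∫ s in (0:ℝ)..T, ((m : ℝ) * (Cf + 1)) * ‖v s - u s‖ := by
            refine intervalIntegral.integral_mono_on hT (hminteg 0 T) hnorminteg
              (fun s _ => ?_)
            have hpt : (∑ i, |u s i - v s i|) ≤ (m : ℝ) * ‖v s - u s‖ := by
              calc (∑ i, |u s i - v s i|) ≤ ∑ _i : Fin m, ‖v s - u s‖ := by
                    refine Finset.sum_le_sum fun i _ => ?_
                    have : |u s i - v s i| = ‖(u s - v s) i‖ := by simp [Real.norm_eq_abs]
                    rw [this, norm_sub_rev (v s) (u s)]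
                    exact norm_le_pi_norm (u s - v s) i
                _ = (m : ℝ) * ‖v s - u s‖ := by
                    simp [Finset.sum_const, Finset.card_univ]
            calc (∑ i, |u s i - v s i|) * Cf ≤ ((m : ℝ) * ‖v s - u s‖) * (Cf + 1) := by
                  refine mul_le_mul hpt (by linarith) hCf0 ?_
                  positivity
              _ = ((m : ℝ) * (Cf + 1)) * ‖v s - u s‖ := by ring
        _ = ((m : ℝ) * (Cf + 1)) * ∫ s in (0:ℝ)..T, ‖v s - u s‖ :=
            intervalIntegral.integral_const_mul _ _
        _ ≤ (m : ℝ) * (Cf + 1) * δ := by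
            refine mul_le_mul_of_nonneg_left happrox (by positivity)
    rw [dist_eq_norm, norm_sub_rev]
    calc ‖S.φ x u T - S.φ x v T‖
        ≤ (∫ s in (0:ℝ)..T, (∑ i, |u s i - v s i|) * Cf) * CE := h
      _ ≤ ((m : ℝ) * (Cf + 1) * δ) * CE := mul_le_mul_of_nonneg_right hEbound hCE.le
      _ < ε := by
          rw [hδdef]
          have hkey : (m : ℝ) * (Cf + 1) * (ε / (2 * CE * (Cf + 1) * (m + 1))) * CE
              = ε * ((m : ℝ) * (Cf + 1) * CE) / (2 * CE * (Cf + 1) * (m + 1)) := by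
            ring
          rw [hkey, div_lt_iff₀ (by positivity)]
          have hm : (m : ℝ) < m + 1 := by linarith
          have hlt : (m : ℝ) * (Cf + 1) * CE < (m + 1) * (Cf + 1) * CE := by
            refine mul_lt_mul_of_pos_right (mul_lt_mul_of_pos_right hm (by linarith)) hCE
          have h2 : ε * ((m : ℝ) * (Cf + 1) * CE) < ε * (((m : ℝ) + 1) * (Cf + 1) * CE) :=
            mul_lt_mul_of_pos_left hlt hε
          have h3 : ε * (((m : ℝ) + 1) * (Cf + 1) * CE) ≤ ε * (2 * CE * (Cf + 1) * ((m : ℝ) + 1)) := by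
            refine mul_le_mul_of_nonneg_left ?_ hε.le
            have ha : 0 ≤ ((m : ℝ) + 1) * (Cf + 1) * CE := by positivity
            nlinarith [ha]
          linarith
  done

lemma closure_reach_eq_closure_reachPC (S : CAS d m) (x : Fin d → ℝ) :
    closure (S.reach x) = closure (S.reachPC x) := by
  refine le_antisymm ?_ ?_
  · exact closure_minimal (S.reach_subset_closure_reachPC x) isClosed_closure
  · refine closure_mono fun z hz => ?_
    obtain ⟨v, hvc, _, t, ht, hφ⟩ := hz
    exact ⟨v, hvc, t, ht, hφ⟩

end CAS
namespace CAS

/-- a minimal invariant set: nonempty, closed, and the closure of the reachable set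
from each of its points -/
def goodInv (S : CAS d m) (A : Set (Fin d → ℝ)) : Prop :=
  A.Nonempty ∧ IsClosed A ∧ ∀ u ∈ A, closure (S.reach u) = A

lemma reach_subset_of_posInv {S : CAS d m} {M : Set (Fin d → ℝ)} (hM : S.posInv M)
    {z : Fin d → ℝ} (hz : z ∈ M) : S.reach z ⊆ M := by
  rintro y ⟨v, hv, t, ht, rfl⟩
  exact hM z hz v hv t ht

lemma exists_minimal_goodInv (S : CAS d m) {M : Set (Fin d → ℝ)} (hMc : IsCompact M)
    (hM : S.posInv M) (hctrl : S.ctrl.Nonempty) {x : Fin d → ℝ} (hx : x ∈ M) :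
    ∃ A, A ⊆ closure (S.reach x) ∧ A ⊆ M ∧ S.goodInv A := by
  classical
  set F : Set (Set (Fin d → ℝ)) :=
    {A | (∃ z ∈ M, A = closure (S.reach z)) ∧ A ⊆ closure (S.reach x)} with hFdef
  have hsubM : ∀ A ∈ F, A ⊆ M := by
    rintro A ⟨⟨z, hz, rfl⟩, -⟩
    exact closure_minimal (reach_subset_of_posInv hM hz) hMc.isClosed
  have hne : ∀ A ∈ F, A.Nonempty := by
    rintro A ⟨⟨z, hz, rfl⟩, -⟩
    exact ⟨z, subset_closure (S.reach_self z hctrl)⟩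
  have hcl : ∀ A ∈ F, IsClosed A := by
    rintro A ⟨⟨z, hz, rfl⟩, -⟩
    exact isClosed_closure
  have hcomp : ∀ A ∈ F, IsCompact A := fun A hA =>
    hMc.of_isClosed_subset (hcl A hA) (hsubM A hA)
  have hzorn := zorn_superset_nonempty F ?_ (closure (S.reach x))
    ⟨⟨x, hx, rfl⟩, subset_rfl⟩
  · obtain ⟨A, hAx, hAF, hAmin⟩ := hzorn
    obtain ⟨⟨w, hw, hweq⟩, hAsub⟩ := hAF
    have hAM : A ⊆ M := hsubM A ⟨⟨w, hw, hweq⟩, hAsub⟩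
    have hAne : A.Nonempty := hne A ⟨⟨w, hw, hweq⟩, hAsub⟩
    have hAcl : IsClosed A := hcl A ⟨⟨w, hw, hweq⟩, hAsub⟩
    refine ⟨A, hAx, hAM, hAne, hAcl, fun u hu => ?_⟩
    have huA : u ∈ closure (S.reach w) := hweq ▸ hu
    have hBF : closure (S.reach u) ∈ F :=
      ⟨⟨u, hAM hu, rfl⟩, (S.closure_reach_mono (hAsub hu))⟩
    have hBA : closure (S.reach u) ⊆ A := by
      rw [hweq]
      exact S.closure_reach_mono huA
    exact le_antisymm hBA (hAmin hBF hBA)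
  · intro c hcF hchain hcne
    haveI : Nonempty (↥c) := hcne.to_subtype
    have hint : (⋂₀ c).Nonempty := by
      have hdir : DirectedOn (· ⊇ ·) c := by
        intro a ha b hb
        rcases eq_or_ne a b with rfl | hab
        · exact ⟨a, ha, subset_rfl, subset_rfl⟩
        · rcases hchain ha hb hab with h | h
          · exact ⟨a, ha, subset_rfl, h⟩
          · exact ⟨b, hb, h, subset_rfl⟩
      exact IsCompact.nonempty_sInter_of_directed_nonempty_isCompact_isClosed
        hdir (fun U hU => hne U (hcF hU))
        (fun U hU => hcomp U (hcF hU)) (fun U hU => hcl U (hcF hU))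
    obtain ⟨z', hz'⟩ := hint
    obtain ⟨A₀, hA₀⟩ := hcne
    have hz'A₀ : z' ∈ A₀ := hz' A₀ hA₀
    have hz'M : z' ∈ M := hsubM A₀ (hcF hA₀) hz'A₀
    have hz'x : z' ∈ closure (S.reach x) := (hcF hA₀).2 hz'A₀
    refine ⟨closure (S.reach z'), ⟨⟨z', hz'M, rfl⟩, S.closure_reach_mono hz'x⟩, ?_⟩
    intro A hA
    obtain ⟨⟨zA, hzA, rfl⟩, -⟩ := hcF hA
    exact S.closure_reach_mono (hz' _ hA)

lemma goodInv_isInvControlSet (S : CAS d m) {A : Set (Fin d → ℝ)}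
    (hctrl : S.ctrl.Nonempty) (hA : S.goodInv A) : S.isInvControlSet A := by
  obtain ⟨hAne, hAcl, hAinv⟩ := hA
  obtain ⟨v₀, hv₀⟩ := hctrl
  have hreach : ∀ u ∈ A, S.reach u ⊆ A := fun u hu =>
    (hAinv u hu) ▸ subset_closure
  have hprops : S.controlSetProps A := by
    constructor
    · intro u hu
      exact ⟨v₀, hv₀, fun t ht => hreach u hu (S.mem_reach_phi hv₀ u ht)⟩
    · intro u hu
      rw [hAinv u hu]
  refine ⟨⟨hAne, hprops, ?_⟩, ?_⟩
  · intro D' hAD' hD'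
    obtain ⟨u, hu⟩ := hAne
    refine le_antisymm ?_ hAD'
    have := hD'.2 u (hAD' hu)
    rw [hAinv u hu] at this
    exact this
  · intro u hu
    rw [hAcl.closure_eq, hAinv u hu]

lemma goodInv_interior_nonempty (S : CAS d m) {M A : Set (Fin d → ℝ)}
    (hacc : S.locAccOn M) (hA : S.goodInv A) (hAM : A ⊆ M) :
    (interior A).Nonempty := by
  obtain ⟨hAne, hAcl, hAinv⟩ := hA
  obtain ⟨w, hw⟩ := hAne
  obtain ⟨⟨y, hy, -⟩, -⟩ := hacc w (hAM hw) 1 one_pos univ Filter.univ_mem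
  have hsub : S.reachLe 1 w ⊆ A := by
    rintro z ⟨v, hv, t, ⟨ht0, -⟩, rfl⟩
    rw [← hAinv w hw]
    exact subset_closure (S.mem_reach_phi hv w ht0)
  exact ⟨y, interior_mono hsub hy⟩

lemma goodInv_eq_of_inter {S : CAS d m} {A B : Set (Fin d → ℝ)} (hA : S.goodInv A)
    (hB : S.goodInv B) (h : (A ∩ B).Nonempty) : A = B := by
  obtain ⟨u, huA, huB⟩ := h
  rw [← hA.2.2 u huA, ← hB.2.2 u huB]

/-- every invariant control set inside `M` is a minimal invariant set -/
lemma invControlSet_goodInv (S : CAS d m) {M C : Set (Fin d → ℝ)} (hMc : IsCompact M)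
    (hM : S.posInv M) (hacc : S.locAccOn M) (hctrl : S.ctrl.Nonempty)
    (hC : S.isInvControlSet C) (hCM : C ⊆ M) : S.goodInv C := by
  obtain ⟨⟨hCne, hCprops, hCmax⟩, hCinv⟩ := hC
  obtain ⟨x₀, hx₀⟩ := hCne
  have hclC : closure C = closure (S.reach x₀) := hCinv x₀ hx₀
  have hclCM : closure C ⊆ M := closure_minimal hCM hMc.isClosed
  have step1 : ∀ y ∈ closure C, S.reach y ⊆ closure C := by
    intro y hy
    rw [hclC] at hy ⊢
    exact S.reach_mono_closure hy
  have step2 : ∀ y ∈ closure C, closure (S.reach y) = closure C := by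
    intro y hy
    have hsub : closure (S.reach y) ⊆ closure C :=
      closure_minimal (step1 y hy) isClosed_closure
    obtain ⟨A, hAy, hAM, hAgood⟩ := S.exists_minimal_goodInv hMc hM hctrl (hclCM hy)
    obtain ⟨p, hp⟩ := S.goodInv_interior_nonempty hacc hAgood hAM
    have hpC : p ∈ closure C := hsub (hAy (interior_subset hp))
    obtain ⟨c, hcint, hcC⟩ :=
      _root_.mem_closure_iff.1 hpC (interior A) isOpen_interior hp
    have h1 : closure (S.reach c) = closure C := (hCinv c hcC).symm
    have h2 : closure (S.reach c) = A := hAgood.2.2 c (interior_subset hcint)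
    have hAC : A = closure C := h2 ▸ h1
    refine le_antisymm hsub ?_
    rw [← hAC]
    exact hAy
  have hCcl : closure C = C := by
    refine hCmax (closure C) subset_closure ?_
    obtain ⟨v₀, hv₀⟩ := hctrl
    constructor
    · intro u hu
      exact ⟨v₀, hv₀, fun t ht => step1 u hu (S.mem_reach_phi hv₀ u ht)⟩
    · intro u hu
      rw [step2 u hu]
  refine ⟨⟨x₀, hx₀⟩, hCcl ▸ isClosed_closure, fun u hu => ?_⟩
  rw [step2 u (subset_closure hu), hCcl]

end CAS
namespace CAS

lemma finite_invControlSets (S : CAS d m) {M : Set (Fin d → ℝ)} (hMc : IsCompact M)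
    (hM : S.posInv M) (hacc : S.locAccOn M) (hctrl : S.ctrl.Nonempty) :
    {C : Set (Fin d → ℝ) | S.isInvControlSet C ∧ C ⊆ M}.Finite := by
  classical
  by_contra hinf
  rw [← Set.Infinite] at hinf
  set g := hinf.natEmbedding with hgdef
  have hgood : ∀ n : ℕ, S.goodInv (g n : Set (Fin d → ℝ)) ∧ (g n : Set (Fin d → ℝ)) ⊆ M :=
    fun n => ⟨S.invControlSet_goodInv hMc hM hacc hctrl (g n).2.1 (g n).2.2, (g n).2.2⟩
  have hpts : ∀ n : ℕ, ∃ p, p ∈ (g n : Set (Fin d → ℝ)) := fun n => (hgood n).1.1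
  choose pts hpts using hpts
  have hptsM : ∀ n, pts n ∈ M := fun n => (hgood n).2 (hpts n)
  obtain ⟨xb, hxbM, idx, hidxmono, hidxtend⟩ := hMc.tendsto_subseq hptsM
  obtain ⟨A, hAx, hAM, hAgood⟩ := S.exists_minimal_goodInv hMc hM hctrl hxbM
  obtain ⟨p, hp⟩ := S.goodInv_interior_nonempty hacc hAgood hAM
  have hpcl : p ∈ closure (S.reach xb) := hAx (interior_subset hp)
  obtain ⟨q, hqint, hqreach⟩ :=
    _root_.mem_closure_iff.1 hpcl (interior A) isOpen_interior hp
  obtain ⟨v, hv, t, ht, rfl⟩ := hqreach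
  obtain ⟨r, hr, hball⟩ := Metric.isOpen_iff.1 isOpen_interior _ hqint
  obtain ⟨Cb, hCb, hlip⟩ := S.phi_init_lipschitz hv xb ht
  have hev : ∀ᶠ k in Filter.atTop, pts (idx k) ∈ Metric.ball xb (r / Cb) :=
    hidxtend (Metric.ball_mem_nhds _ (div_pos hr hCb))
  rw [Filter.eventually_atTop] at hev
  obtain ⟨K, hK⟩ := hev
  have hmem : ∀ k, K ≤ k → (g (idx k) : Set (Fin d → ℝ)) = A := by
    intro k hk
    have hclose : dist (pts (idx k)) xb < r / Cb := hK k hk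
    have h1 : S.φ (pts (idx k)) v t ∈ Metric.ball (S.φ xb v t) r := by
      rw [Metric.mem_ball, dist_eq_norm]
      calc ‖S.φ (pts (idx k)) v t - S.φ xb v t‖ ≤ Cb * ‖pts (idx k) - xb‖ :=
            hlip _ t ⟨ht, le_rfl⟩
        _ < Cb * (r / Cb) := by
            refine mul_lt_mul_of_pos_left ?_ hCb
            rw [← dist_eq_norm]
            exact hclose
        _ = r := by field_simp
    have h2 : S.φ (pts (idx k)) v t ∈ A := interior_subset (hball h1)
    have h3 : S.φ (pts (idx k)) v t ∈ (g (idx k) : Set (Fin d → ℝ)) := by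
      rw [← (hgood (idx k)).1.2.2 (pts (idx k)) (hpts (idx k))]
      exact subset_closure (S.mem_reach_phi hv _ ht)
    exact goodInv_eq_of_inter (hgood (idx k)).1 hAgood ⟨_, h3, h2⟩
  have heq : g (idx K) = g (idx (K + 1)) :=
    Subtype.ext ((hmem K le_rfl).trans (hmem (K + 1) (Nat.le_succ K)).symm)
  have := g.injective heq
  exact absurd this (ne_of_lt (hidxmono (Nat.lt_succ_self K)))

end CAS

/-- A nonempty compact positively invariant and locally accessible
set `M` contains at least one and at most finitely many invariant control sets; each
of them is compact with nonempty interior, and every `x ∈ M` can be steered by a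
piecewise constant control into the interior of one of them. -/
theorem stmt11 {d m : ℕ} (S : CAS d m) (M : Set (Fin d → ℝ))
    (hMc : IsCompact M) (hMne : M.Nonempty) (hM : S.posInv M) (hacc : S.locAccOn M) :
    {C : Set (Fin d → ℝ) | S.isInvControlSet C ∧ C ⊆ M}.Nonempty ∧
    {C : Set (Fin d → ℝ) | S.isInvControlSet C ∧ C ⊆ M}.Finite ∧
    (∀ C, S.isInvControlSet C → C ⊆ M → IsCompact C ∧ (interior C).Nonempty) ∧
    ∀ x ∈ M, ∃ C, S.isInvControlSet C ∧ C ⊆ M ∧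
      (interior C ∩ S.reachPC x).Nonempty := by
  obtain ⟨x₀, hx₀⟩ := hMne
  have hctrl : S.ctrl.Nonempty := by
    obtain ⟨⟨y₀, hy₀, -⟩, -⟩ := hacc x₀ hx₀ 1 one_pos univ Filter.univ_mem
    obtain ⟨v, hv, -⟩ := interior_subset hy₀
    exact ⟨v, hv⟩
  have main4 : ∀ x ∈ M, ∃ C, S.isInvControlSet C ∧ C ⊆ M ∧
      (interior C ∩ S.reachPC x).Nonempty := by
    intro x hx
    obtain ⟨A, hAx, hAM, hAgood⟩ := S.exists_minimal_goodInv hMc hM hctrl hx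
    refine ⟨A, S.goodInv_isInvControlSet hctrl hAgood, hAM, ?_⟩
    obtain ⟨p, hp⟩ := S.goodInv_interior_nonempty hacc hAgood hAM
    have hpcl : p ∈ closure (S.reachPC x) := by
      rw [← S.closure_reach_eq_closure_reachPC]
      exact hAx (interior_subset hp)
    obtain ⟨q, hqi, hqr⟩ :=
      _root_.mem_closure_iff.1 hpcl (interior A) isOpen_interior hp
    exact ⟨q, hqi, hqr⟩
  refine ⟨?_, S.finite_invControlSets hMc hM hacc hctrl, ?_, main4⟩
  · obtain ⟨C, hC1, hC2, -⟩ := main4 x₀ hx₀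
    exact ⟨C, hC1, hC2⟩
  · intro C hC hCM
    have hgood := S.invControlSet_goodInv hMc hM hacc hctrl hC hCM
    exact ⟨hMc.of_isClosed_subset hgood.2.1 hCM,
      S.goodInv_interior_nonempty hacc hgood hCM⟩
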